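/- Let Γ be a procomonad on a category C and W : D → C a functor. Define Γ_W(D', D) := Γ(W D', W D) with the induced counit and comultiplication (the lifting of Γ through W in profunctors). Then the square formed by the underlying functors und : D^{Γ_W} → D, und : C^Γ → C, the induced functor D^{Γ_W} → C^Γ, and W : D → C is a pullback of categories. -/

import Mathlib

open CategoryTheory

namespace WoodStmt11

variable {C : Type*} [Category C]

/-- A procomonad on `C`: a profunctor `Γ : C ⇸ C` (given by `P` with its two-sided
functorial action) equipped with a counit `ε : Γ(X,Y) → C(X,Y)` and a comultiplication
`δ : Γ(X,Y) → ∫^U Γ(U,Y) × Γ(X,U)` into the coend describing `Γ ∘ Γ`. -/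
structure ProComonad (C : Type*) [Category C] where
  P : C → C → Type*
  map : ∀ {X X' Y Y'}, (X' ⟶ X) → (Y ⟶ Y') → P X Y → P X' Y'
  map_id : ∀ (X Y : C) (p : P X Y), map (𝟙 X) (𝟙 Y) p = p
  map_comp : ∀ {X X' X'' Y Y' Y'' : C} (f : X'' ⟶ X') (f' : X' ⟶ X)
    (g : Y ⟶ Y') (g' : Y' ⟶ Y'') (p : P X Y),
    map f g' (map f' g p) = map (f ≫ f') (g ≫ g') p
  eps : ∀ {X Y}, P X Y → (X ⟶ Y)
  eps_natural : ∀ {X X' Y Y'} (f : X' ⟶ X) (g : Y ⟶ Y') (p : P X Y),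
    eps (map f g p) = f ≫ eps p ≫ g
  dlt : ∀ {X Y}, P X Y →
    Quot (fun (p q : Σ U : C, P U Y × P X U) =>
      ∃ g : p.1 ⟶ q.1, p.2.1 = map g (𝟙 Y) q.2.1 ∧ q.2.2 = map (𝟙 X) g p.2.2)

theorem comp_cond (Γ : ProComonad C) {A B D : C} (a : Γ.P A A) (b : Γ.P B B) (d : Γ.P D D)
    (f : A ⟶ B) (g : B ⟶ D)
    (hf : Γ.map (𝟙 A) f a = Γ.map f (𝟙 B) b)
    (hg : Γ.map (𝟙 B) g b = Γ.map g (𝟙 D) d) :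
    Γ.map (𝟙 A) (f ≫ g) a = Γ.map (f ≫ g) (𝟙 D) d := by
  have e1 := Γ.map_comp (𝟙 A) (𝟙 A) f g a
  simp only [Category.id_comp] at e1
  have e2 := Γ.map_comp (𝟙 A) f (𝟙 B) g b
  simp only [Category.id_comp] at e2
  have e3 := Γ.map_comp f g (𝟙 D) (𝟙 D) d
  simp only [Category.comp_id] at e3
  have e4 := Γ.map_comp f (𝟙 B) g (𝟙 D) b
  simp only [Category.comp_id] at e4
  rw [← e1, hf, e2, ← e3, ← hg, e4]

/-- A `Γ`-algebra: an object with a coaction `γ ∈ Γ(C₀,C₀)` with `ε(γ) = 1` and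
`δ(γ) = ⟦(γ, γ)⟧`. -/
structure GammaAlg (Γ : ProComonad C) where
  C0 : C
  γ : Γ.P C0 C0
  counit : Γ.eps γ = 𝟙 C0
  comult : Γ.dlt γ = Quot.mk _ ⟨C0, γ, γ⟩

instance (Γ : ProComonad C) : Category (GammaAlg Γ) where
  Hom A B := { f : A.C0 ⟶ B.C0 // Γ.map (𝟙 A.C0) f A.γ = Γ.map f (𝟙 B.C0) B.γ }
  id A := ⟨𝟙 A.C0, rfl⟩
  comp {A B D} f g := ⟨f.1 ≫ g.1, comp_cond Γ A.γ B.γ D.γ f.1 g.1 f.2 g.2⟩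
  id_comp f := by apply Subtype.ext; exact Category.id_comp f.1
  comp_id f := by apply Subtype.ext; exact Category.comp_id f.1
  assoc f g h := by apply Subtype.ext; exact Category.assoc f.1 g.1 h.1

/-- The underlying-object functor. -/
def und (Γ : ProComonad C) : GammaAlg Γ ⥤ C where
  obj A := A.C0
  map f := f.1

variable {D : Type*} [Category D]

/-- Algebras for the lifted procomonad `Γ_W = W* ∘ Γ ∘ W_*` on `D`, where
`Γ_W(D',D) = Γ(W D', W D)`. -/
structure GammaWAlg (Γ : ProComonad C) (W : D ⥤ C) where
  D0 : D
  γ : Γ.P (W.obj D0) (W.obj D0)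
  counit : Γ.eps γ = 𝟙 (W.obj D0)
  comult : Γ.dlt γ = Quot.mk _ ⟨W.obj D0, γ, γ⟩

instance (Γ : ProComonad C) (W : D ⥤ C) : Category (GammaWAlg Γ W) where
  Hom A B := { f : A.D0 ⟶ B.D0 //
    Γ.map (𝟙 (W.obj A.D0)) (W.map f) A.γ = Γ.map (W.map f) (𝟙 (W.obj B.D0)) B.γ }
  id A := ⟨𝟙 A.D0, by rw [W.map_id]⟩
  comp {A B E} f g := ⟨f.1 ≫ g.1, by
    rw [W.map_comp]
    exact comp_cond Γ A.γ B.γ E.γ (W.map f.1) (W.map g.1) f.2 g.2⟩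
  id_comp f := by apply Subtype.ext; exact Category.id_comp f.1
  comp_id f := by apply Subtype.ext; exact Category.comp_id f.1
  assoc f g h := by apply Subtype.ext; exact Category.assoc f.1 g.1 h.1

/-- The underlying-object functor for `Γ_W`-algebras. -/
def undW (Γ : ProComonad C) (W : D ⥤ C) : GammaWAlg Γ W ⥤ D where
  obj A := A.D0
  map f := f.1

/-- The comparison functor `D^{Γ_W} ⥤ C^Γ` over `W`. -/
def cmp (Γ : ProComonad C) (W : D ⥤ C) : GammaWAlg Γ W ⥤ GammaAlg Γ where
  obj A := ⟨W.obj A.D0, A.γ, A.counit, A.comult⟩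
  map f := ⟨W.map f.1, f.2⟩
  map_id A := by
    apply Subtype.ext
    show W.map (𝟙 A.D0) = 𝟙 (W.obj A.D0)
    simp
  map_comp f g := by
    apply Subtype.ext
    show W.map (f.1 ≫ g.1) = W.map f.1 ≫ W.map g.1
    simp

theorem trans_prop (Γ : ProComonad C) {X Y : C} (h : X = Y) (γ : Γ.P X X)
    (c : Γ.eps γ = 𝟙 X) (m : Γ.dlt γ = Quot.mk _ ⟨X, γ, γ⟩) :
    Γ.eps (h ▸ γ : Γ.P Y Y) = 𝟙 Y ∧
    Γ.dlt (h ▸ γ : Γ.P Y Y) = Quot.mk _ ⟨Y, h ▸ γ, h ▸ γ⟩ := by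
  subst h; exact ⟨c, m⟩

theorem hom_cond_transport (Γ : ProComonad C) {A A' B B' : C} (hA : A = A') (hB : B = B')
    (a : Γ.P A A) (b : Γ.P B B) (f : A' ⟶ B')
    (h : Γ.map (𝟙 A) (eqToHom hA ≫ f ≫ eqToHom hB.symm) a
       = Γ.map (eqToHom hA ≫ f ≫ eqToHom hB.symm) (𝟙 B) b) :
    Γ.map (𝟙 A') f (hA ▸ a : Γ.P A' A') = Γ.map f (𝟙 B') (hB ▸ b : Γ.P B' B') := by
  subst hA; subst hB; simpa using h

theorem heq_rec (Γ : ProComonad C) {X Y : C} (h : X = Y) (γ : Γ.P X X) :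
    HEq (h ▸ γ : Γ.P Y Y) γ := by subst h; rfl

theorem GammaAlg.ext' {Γ : ProComonad C} {A B : GammaAlg Γ} (h : A.C0 = B.C0)
    (hγ : HEq A.γ B.γ) : A = B := by
  cases A; cases B
  dsimp at h
  subst h
  cases eq_of_heq hγ
  rfl

theorem GammaAlg.gamma_heq {Γ : ProComonad C} {A B : GammaAlg Γ} (h : A = B) :
    HEq A.γ B.γ := by subst h; rfl

theorem GammaAlg.comp_fst {Γ : ProComonad C} {A B E : GammaAlg Γ} (u : A ⟶ B) (v : B ⟶ E) :
    (u ≫ v).1 = u.1 ≫ v.1 := rfl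

theorem GammaAlg.eqToHom_fst {Γ : ProComonad C} {A B : GammaAlg Γ} (h : A = B) :
    (eqToHom h).1 = eqToHom (congrArg GammaAlg.C0 h) := by subst h; rfl

theorem GammaWAlg.ext' {Γ : ProComonad C} {W : D ⥤ C} {A B : GammaWAlg Γ W}
    (h : A.D0 = B.D0) (hγ : HEq A.γ B.γ) : A = B := by
  cases A; cases B
  dsimp at h
  subst h
  cases eq_of_heq hγ
  rfl

theorem GammaWAlg.comp_fst {Γ : ProComonad C} {W : D ⥤ C} {A B E : GammaWAlg Γ W}
    (u : A ⟶ B) (v : B ⟶ E) : (u ≫ v).1 = u.1 ≫ v.1 := rfl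

theorem GammaWAlg.eqToHom_fst {Γ : ProComonad C} {W : D ⥤ C} {A B : GammaWAlg Γ W}
    (h : A = B) : (eqToHom h).1 = eqToHom (congrArg GammaWAlg.D0 h) := by subst h; rfl

/-- The induced functor `E ⥤ D^{Γ_W}` from a cone over the cospan. -/
def Rfun (Γ : ProComonad C) (W : D ⥤ C) {E : Type*} [Category E]
    (Pf : E ⥤ GammaAlg Γ) (Q : E ⥤ D) (h : Pf ⋙ und Γ = Q ⋙ W) :
    E ⥤ GammaWAlg Γ W where
  obj e := ⟨Q.obj e, (Functor.congr_obj h e : (Pf.obj e).C0 = W.obj (Q.obj e)) ▸ (Pf.obj e).γ,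
    (trans_prop Γ (Functor.congr_obj h e) _ (Pf.obj e).counit (Pf.obj e).comult).1,
    (trans_prop Γ (Functor.congr_obj h e) _ (Pf.obj e).counit (Pf.obj e).comult).2⟩
  map {e e'} f := ⟨Q.map f,
    hom_cond_transport Γ (Functor.congr_obj h e) (Functor.congr_obj h e') _ _ _
      (by
        have hm : (Pf.map f).1 = eqToHom (Functor.congr_obj h e) ≫ W.map (Q.map f) ≫
            eqToHom (Functor.congr_obj h e').symm := Functor.congr_hom h f
        rw [← hm]; exact (Pf.map f).2)⟩
  map_id e := by apply Subtype.ext; exact Q.map_id e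
  map_comp f g := by apply Subtype.ext; exact Q.map_comp f g

theorem Rfun_obj_D0 (Γ : ProComonad C) (W : D ⥤ C) {E : Type*} [Category E]
    (Pf : E ⥤ GammaAlg Γ) (Q : E ⥤ D) (h : Pf ⋙ und Γ = Q ⋙ W) (e : E) :
    ((Rfun Γ W Pf Q h).obj e).D0 = Q.obj e := rfl

theorem Rfun_obj_γ (Γ : ProComonad C) (W : D ⥤ C) {E : Type*} [Category E]
    (Pf : E ⥤ GammaAlg Γ) (Q : E ⥤ D) (h : Pf ⋙ und Γ = Q ⋙ W) (e : E) :
    HEq ((Rfun Γ W Pf Q h).obj e).γ (Pf.obj e).γ :=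
  heq_rec Γ (Functor.congr_obj h e) (Pf.obj e).γ

theorem Rfun_map_fst (Γ : ProComonad C) (W : D ⥤ C) {E : Type*} [Category E]
    (Pf : E ⥤ GammaAlg Γ) (Q : E ⥤ D) (h : Pf ⋙ und Γ = Q ⋙ W) {e e' : E} (f : e ⟶ e') :
    ((Rfun Γ W Pf Q h).map f).1 = Q.map f := rfl

set_option maxHeartbeats 1000000 in
/-- For a procomonad `Γ` on `C` and a functor `W : D ⥤ C`, the square
formed by the underlying functors `D^{Γ_W} ⥤ D`, `C^Γ ⥤ C`, the comparison functor
`D^{Γ_W} ⥤ C^Γ` and `W : D ⥤ C` is a pullback of categories. -/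
theorem gammaW_pullback (Γ : ProComonad C) (W : D ⥤ C) :
    cmp Γ W ⋙ und Γ = undW Γ W ⋙ W ∧
    ∀ {E : Type*} [Category E] (Pf : E ⥤ GammaAlg Γ) (Q : E ⥤ D),
      Pf ⋙ und Γ = Q ⋙ W →
      ∃! R : E ⥤ GammaWAlg Γ W, R ⋙ cmp Γ W = Pf ∧ R ⋙ undW Γ W = Q := by
  constructor
  · rfl
  · intro E _ Pf Q h
    have hobj : ∀ e : E, (Pf.obj e).C0 = W.obj (Q.obj e) := fun e => Functor.congr_obj h e
    have hmap : ∀ {e e' : E} (f : e ⟶ e'), (Pf.map f).1 =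
        eqToHom (hobj e) ≫ W.map (Q.map f) ≫ eqToHom (hobj e').symm := by
      intro e e' f
      exact Functor.congr_hom h f
    refine ⟨Rfun Γ W Pf Q h, ⟨?_, ?_⟩, ?_⟩
    · refine CategoryTheory.Functor.ext (fun e => ?_) (fun e e' f => ?_)
      · exact GammaAlg.ext' (hobj e).symm (Rfun_obj_γ Γ W Pf Q h e)
      · apply Subtype.ext
        rw [GammaAlg.comp_fst, GammaAlg.comp_fst, GammaAlg.eqToHom_fst,
          GammaAlg.eqToHom_fst, hmap f]
        show W.map (Q.map f) = _
        have key : W.map (Q.map f) = eqToHom (hobj e).symm ≫ (eqToHom (hobj e) ≫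
            W.map (Q.map f) ≫ eqToHom (hobj e').symm) ≫ eqToHom (hobj e') := by simp
        exact key
    · refine CategoryTheory.Functor.ext (fun e => rfl) (fun e e' f => ?_)
      show Q.map f = _
      erw [eqToHom_refl, eqToHom_refl]
      exact (by simp : Q.map f = 𝟙 (Q.obj e) ≫ Q.map f ≫ 𝟙 (Q.obj e'))
    · rintro R' ⟨hc, hu⟩
      have hD0 : ∀ e : E, (R'.obj e).D0 = Q.obj e := fun e => Functor.congr_obj hu e
      refine CategoryTheory.Functor.ext (fun e => ?_) (fun e e' f => ?_)
      · refine GammaWAlg.ext' (hD0 e) ?_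
        have h1 : HEq (R'.obj e).γ (Pf.obj e).γ :=
          GammaAlg.gamma_heq (Functor.congr_obj hc e)
        exact h1.trans (Rfun_obj_γ Γ W Pf Q h e).symm
      · apply Subtype.ext
        have h2 : (R'.map f).1 = eqToHom (hD0 e) ≫ Q.map f ≫ eqToHom (hD0 e').symm :=
          Functor.congr_hom hu f
        rw [GammaWAlg.comp_fst, GammaWAlg.comp_fst, GammaWAlg.eqToHom_fst,
          GammaWAlg.eqToHom_fst, h2, Rfun_map_fst]
        rfl

end WoodStmt11
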